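/- Let G be a group and A an infinite-dimensional vector space over a field K. Suppose G contains an element g of infinite order. Then there exists a linear cellular automaton τ : A^G → A^G whose image τ(A^G) is not closed in the prodiscrete topology on A^G. -/

import Mathlib

def shiftSigma (G : Type*) [Group G] {A : Type*} (D : Set G) (P : Set (D → A)) :
    Set (G → A) :=
  {x | ∀ g : G, (fun d : D => x (g * (d : G))) ∈ P}

def prodiscreteTop (G A : Type*) : TopologicalSpace (G → A) :=
  @Pi.topologicalSpace G (fun _ => A) (fun _ => ⊥)

def IsLinearSubshift (K : Type*) {G A : Type*} [Field K] [Group G] [AddCommGroup A]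
    [Module K A] (S : Set (G → A)) : Prop :=
  (∃ M : Submodule K (G → A), (M : Set (G → A)) = S) ∧
    (∀ g : G, ∀ x ∈ S, (fun h => x (g⁻¹ * h)) ∈ S) ∧
    @IsClosed _ (prodiscreteTop G A) S

def IsSFT {G A : Type*} [Group G] (S : Set (G → A)) : Prop :=
  ∃ (D : Finset G) (P : Set (↥(D : Set G) → A)), S = shiftSigma G (D : Set G) P

def IsLCA (K : Type*) {G A : Type*} [Field K] [Group G] [AddCommGroup A] [Module K A]
    (τ : (G → A) → (G → A)) : Prop :=
  IsLinearMap K τ ∧ ∃ (M : Finset G) (μ : (↥(M : Set G) → A) → A), IsLinearMap K μ ∧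
    ∀ (x : G → A) (g : G), τ x g = μ (fun m : (M : Set G) => x (g * (m : G)))

theorem stmt14 {G K A : Type*} [Group G] [Field K] [AddCommGroup A] [Module K A]
    (hinf : ¬ FiniteDimensional K A) (g : G) (hg : ¬ IsOfFinOrder g) :
    ∃ τ : (G → A) → (G → A), IsLCA K τ ∧
      ¬ @IsClosed _ (prodiscreteTop G A) (Set.range τ) := by
  classical
  -- Set up a basis with an ℕ-indexed independent family
  set ι := Module.Basis.ofVectorSpaceIndex K A with hι
  set b : Module.Basis ι K A := Module.Basis.ofVectorSpace K A with hb
  haveI : Infinite ι := by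
    by_contra hfin
    rw [not_infinite_iff_finite] at hfin
    exact hinf (Module.Finite.of_basis b)
  set u : ℕ ↪ ι := Infinite.natEmbedding ι with hu
  have hchoose : ∀ (n : ℕ) (h : ∃ m, u m = u n), h.choose = n := by
    intro n h
    exact u.injective h.choose_spec
  set T : A →ₗ[K] A :=
    b.constr K (fun i => if h : ∃ n, u n = i then b (u (h.choose + 1)) else b i) with hT
  set φ : A →ₗ[K] Polynomial K :=
    b.constr K (fun i => if h : ∃ n, u n = i then Polynomial.X ^ h.choose else 0) with hφ
  have hφu : ∀ n : ℕ, φ (b (u n)) = Polynomial.X ^ n := by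
    intro n
    have h' : ∃ m, u m = u n := ⟨n, rfl⟩
    rw [hφ, Module.Basis.constr_basis, dif_pos h', hchoose n h']
  have hφv : ∀ i, (¬ ∃ n, u n = i) → φ (b i) = 0 := by
    intro i hi
    rw [hφ, Module.Basis.constr_basis, dif_neg hi]
  have hTu : ∀ n : ℕ, T (b (u n)) = b (u (n + 1)) := by
    intro n
    have h' : ∃ m, u m = u n := ⟨n, rfl⟩
    rw [hT, Module.Basis.constr_basis, dif_pos h', hchoose n h']
  have hTv : ∀ i, (¬ ∃ n, u n = i) → T (b i) = b i := by
    intro i hi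
    rw [hT, Module.Basis.constr_basis, dif_neg hi]
  have hφT : ∀ a : A, φ (T a) = Polynomial.X * φ a := by
    have h : φ.comp T = (LinearMap.mulLeft K (Polynomial.X : Polynomial K)).comp φ := by
      apply b.ext
      intro i
      simp only [LinearMap.comp_apply, LinearMap.mulLeft_apply]
      by_cases h' : ∃ n, u n = i
      · obtain ⟨n, rfl⟩ := h'
        rw [hTu n, hφu (n + 1), hφu n, pow_succ, mul_comm]
      · rw [hTv i h', hφv i h', mul_zero]
    intro a
    exact LinearMap.congr_fun h a
  set e0 : A := b (u 0) with he0
  have hφe0 : φ e0 = 1 := by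
    rw [he0, hφu 0, pow_zero]
  -- the cellular automaton
  refine ⟨fun x h => T (x h) - x (h * g), ⟨?_, ?_⟩, ?_⟩
  · constructor
    · intro x y
      funext h
      simp only [Pi.add_apply, map_add]
      abel
    · intro c x
      funext h
      simp only [Pi.smul_apply, map_smul, smul_sub]
  · refine ⟨({1, g} : Finset G), ?_⟩
    have h1 : (1 : G) ∈ (({1, g} : Finset G) : Set G) := by simp
    have h2 : g ∈ (({1, g} : Finset G) : Set G) := by simp
    refine ⟨fun v => T (v ⟨1, h1⟩) - v ⟨g, h2⟩, ⟨?_, ?_⟩, ?_⟩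
    · intro v w
      simp only [Pi.add_apply, map_add]
      abel
    · intro c v
      simp only [Pi.smul_apply, map_smul, smul_sub]
    · intro x h
      simp only [mul_one]
  -- non-closedness
  intro hcl
  letI : TopologicalSpace A := ⊥
  have hcl' : IsClosed (Set.range fun (x : G → A) (h : G) => T (x h) - x (h * g)) := hcl
  have hopen := hcl'.isOpen_compl
  set y : G → A := fun _ => e0 with hy
  have hginj : Function.Injective (fun n : ℕ => g ^ n) :=
    injective_pow_iff_not_isOfFinOrder.mpr hg
  have hpow : ∀ m n : ℕ, g ^ m = g ^ n → m = n := fun m n h => hginj h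
  -- y is not in the range
  have hynr : y ∉ Set.range fun (x : G → A) (h : G) => T (x h) - x (h * g) := by
    rintro ⟨x, hx⟩
    set q : ℤ → Polynomial K := fun n => φ (x (g ^ n)) with hq
    have hrec : ∀ n : ℤ, q (n + 1) = Polynomial.X * q n - 1 := by
      intro n
      have h1 : T (x (g ^ n)) - x (g ^ n * g) = e0 := congrFun hx (g ^ n)
      have h2 : φ (T (x (g ^ n))) - φ (x (g ^ n * g)) = φ e0 := by
        rw [← map_sub, h1]
      rw [hφT, hφe0] at h2
      have h3 : g ^ (n + 1) = g ^ n * g := zpow_add_one g n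
      simp only [hq, h3]
      linear_combination -h2
    have hc0 : ∀ n : ℤ, (q n).coeff 0 = -1 := by
      intro n
      have h := hrec (n - 1)
      rw [show n - 1 + 1 = n from by ring] at h
      rw [h]
      simp [Polynomial.mul_coeff_zero]
    have hne : ∀ n : ℤ, q n ≠ 0 := by
      intro n h0
      have := hc0 n
      rw [h0] at this
      simp only [Polynomial.coeff_zero] at this
      exact one_ne_zero (neg_eq_zero.mp this.symm)
    have hdeg : ∀ n : ℤ, (q (n + 1)).natDegree = (q n).natDegree + 1 := by
      intro n
      have hX : (Polynomial.X * q n).natDegree = (q n).natDegree + 1 := by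
        rw [Polynomial.natDegree_mul Polynomial.X_ne_zero (hne n), Polynomial.natDegree_X]
        omega
      rw [hrec n, Polynomial.natDegree_sub_eq_left_of_natDegree_lt, hX]
      rw [hX, Polynomial.natDegree_one]
      omega
    have hiter : ∀ k : ℕ, (q 0).natDegree = (q (-(k : ℤ))).natDegree + k := by
      intro k
      induction k with
      | zero => simp
      | succ m ih =>
        have h := hdeg (-((m : ℤ) + 1))
        rw [show -((m : ℤ) + 1) + 1 = -(m : ℤ) from by ring] at h
        rw [ih, h]
        push_cast
        omega
    have := hiter ((q 0).natDegree + 1)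
    omega
  obtain ⟨I, U, hU, hsub⟩ := isOpen_pi_iff.mp hopen y hynr
  -- build a preimage agreeing with y on I
  set w : G → G → A :=
    fun f h => if hh : ∃ n : ℕ, h = f * g ^ (n + 1) then -((T ^ hh.choose) e0) else 0 with hw
  have hwpos : ∀ (f : G) (n : ℕ), w f (f * g ^ (n + 1)) = -((T ^ n) e0) := by
    intro f n
    have hh : ∃ m : ℕ, f * g ^ (n + 1) = f * g ^ (m + 1) := ⟨n, rfl⟩
    rw [hw]
    simp only
    rw [dif_pos hh]
    have hcn : hh.choose = n := by
      have hs := hh.choose_spec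
      have h1 := mul_left_cancel hs
      have := hpow _ _ h1
      omega
    rw [hcn]
  have hwneg : ∀ (f h : G), (¬ ∃ n : ℕ, h = f * g ^ (n + 1)) → w f h = 0 := by
    intro f h hh
    rw [hw]
    simp only
    rw [dif_neg hh]
  have key : ∀ f h : G, T (w f h) - w f (h * g) = if h = f then e0 else 0 := by
    intro f h
    by_cases hef : h = f
    · subst hef
      have ha : w h h = 0 := by
        apply hwneg
        rintro ⟨n, hn⟩
        apply hg
        have h1 : g ^ (n + 1) = 1 := (left_eq_mul.mp hn).symm ▸ rfl
        exact isOfFinOrder_iff_pow_eq_one.mpr ⟨n + 1, Nat.succ_pos n, left_eq_mul.mp hn⟩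
      have hb2 : w h (h * g) = -e0 := by
        have := hwpos h 0
        simpa using this
      rw [ha, hb2, map_zero, if_pos rfl, zero_sub, neg_neg]
    · rw [if_neg hef]
      by_cases hh : ∃ n : ℕ, h = f * g ^ (n + 1)
      · obtain ⟨n, rfl⟩ := hh
        rw [hwpos f n]
        have hmm : f * g ^ (n + 1) * g = f * g ^ (n + 1 + 1) := by
          rw [mul_assoc, ← pow_succ]
        rw [hmm, hwpos f (n + 1), map_neg]
        have hTp : T ((T ^ n) e0) = (T ^ (n + 1)) e0 := by
          rw [pow_succ', Module.End.mul_apply]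
        rw [hTp, sub_neg_eq_add, neg_add_cancel]
      · rw [hwneg f _ hh, map_zero, hwneg f (h * g) ?_, sub_zero]
        rintro ⟨n, hn⟩
        cases n with
        | zero =>
          apply hef
          rw [pow_one] at hn
          exact mul_right_cancel hn
        | succ m =>
          apply hh
          refine ⟨m, ?_⟩
          rw [pow_succ, ← mul_assoc] at hn
          exact mul_right_cancel hn
  set x : G → A := fun h => ∑ f ∈ I, w f h with hxdef
  have hτx : ∀ h ∈ I, T (x h) - x (h * g) = e0 := by
    intro h hhI
    rw [hxdef]
    simp only
    rw [map_sum, ← Finset.sum_sub_distrib]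
    rw [Finset.sum_congr rfl fun f _ => key f h]
    rw [Finset.sum_ite_eq I h fun _ => e0, if_pos hhI]
  have hmem : (fun h => T (x h) - x (h * g)) ∈ (I : Set G).pi U := by
    intro h hhI
    show T (x h) - x (h * g) ∈ U h
    rw [hτx h (Finset.mem_coe.mp hhI)]
    exact (hU h (Finset.mem_coe.mp hhI)).2
  exact (hsub hmem) ⟨x, rfl⟩
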